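/- In a generic 2×2 environment (no repeated payoffs for either player), if some player has an absolutely dominated action, then there is a unique interdependent-choice equilibrium with respect to the set of C-rationalizable profiles: the point mass on the profile where that player plays his absolutely dominant action and the opponent plays the unique best response to it. -/

import Mathlib

open Finset

/-- `b1` absolutely dominates `a1` within opponent subspace `S2` (player 1). -/
def AbsDomIn1 (u1 : Bool → Bool → ℝ) (S2 : Set Bool) (b1 a1 : Bool) : Prop :=
  ∀ c2 ∈ S2, ∀ d2 ∈ S2, u1 a1 c2 < u1 b1 d2

/-- `b2` absolutely dominates `a2` within opponent subspace `S1` (player 2). -/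
def AbsDomIn2 (u2 : Bool → Bool → ℝ) (S1 : Set Bool) (b2 a2 : Bool) : Prop :=
  ∀ c1 ∈ S1, ∀ d1 ∈ S1, u2 c1 a2 < u2 d1 b2

/-- The actions not absolutely dominated within `S` (the C-rationalizable ones). -/
def CRop (u1 u2 : Bool → Bool → ℝ) (S : Set Bool × Set Bool) :
    Set Bool × Set Bool :=
  ({a1 | ¬ ∃ b1, AbsDomIn1 u1 S.2 b1 a1}, {a2 | ¬ ∃ b2, AbsDomIn2 u2 S.1 b2 a2})

/-- The largest self-C-rationalizable set `A^CR`. -/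
def ACR (u1 u2 : Bool → Bool → ℝ) : Set Bool × Set Bool :=
  ({a1 | ∃ S, S ≤ CRop u1 u2 S ∧ a1 ∈ S.1}, {a2 | ∃ S, S ≤ CRop u1 u2 S ∧ a2 ∈ S.2})

/-- Supports of the marginals. -/
def msupp1 (α : Bool × Bool → ℝ) : Set Bool := {a1 | ∃ a2, α (a1, a2) ≠ 0}
def msupp2 (α : Bool × Bool → ℝ) : Set Bool := {a2 | ∃ a1, α (a1, a2) ≠ 0}

/-- `α` is an ICE with respect to threats `B` (effective threats `B ∪ supp α`). -/
noncomputable def IceCond (u1 u2 : Bool → Bool → ℝ) (B : Set Bool × Set Bool)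
    (α : Bool × Bool → ℝ) : Prop :=
  (∀ a, 0 ≤ α a) ∧ (∑ a, α a = 1) ∧
  ∃ θ : Bool × Bool → ℝ, (∀ a, 0 ≤ θ a ∧ θ a ≤ 1) ∧
    (∀ a1 a1' : Bool, 0 ≤ ∑ a2, α (a1, a2) *
      (u1 a1 a2 - (1 - θ (a1, a2)) * u1 a1' a2
        - θ (a1, a2) * sInf ((fun a2 => u1 a1' a2) '' (B.2 ∪ msupp2 α)))) ∧
    (∀ a2 a2' : Bool, 0 ≤ ∑ a1, α (a1, a2) *
      (u2 a1 a2 - θ (a1, a2) * u2 a1 a2'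
        - (1 - θ (a1, a2)) * sInf ((fun a1 => u2 a1 a2') '' (B.1 ∪ msupp1 α))))

lemma sum_bool_c (c : Bool) (f : Bool → ℝ) : ∑ x, f x = f c + f !c := by
  cases c <;> rw [Fintype.sum_bool] <;> simp <;> ring

lemma sum_prod_bool (c1 c2 : Bool) (f : Bool × Bool → ℝ) :
    ∑ a, f a = f (c1,c2) + f (c1,!c2) + f (!c1,c2) + f (!c1,!c2) := by
  cases c1 <;> cases c2 <;> simp [Fintype.sum_prod_type, Fintype.sum_bool] <;> ring

lemma bool_eq_or (x y : Bool) : x = y ∨ x = !y := by cases x <;> cases y <;> simp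

lemma bracket_neg {c a b t : ℝ} (h0 : 0 ≤ t) (h1 : t ≤ 1) (ha : c < a) (hb : c < b) :
    c - (1 - t) * a - t * b < 0 := by
  rcases lt_or_ge t 1 with h | h
  · nlinarith [mul_pos (sub_pos.mpr h) (sub_pos.mpr ha), mul_nonneg h0 (sub_pos.mpr hb).le]
  · have ht : t = 1 := le_antisymm h1 h
    subst ht; nlinarith

lemma main_lemma (u1 u2 : Bool → Bool → ℝ)
    (hg2 : Function.Injective (fun p : Bool × Bool => u2 p.1 p.2))
    (hdom1 : ∃ a b : Bool, AbsDomIn1 u1 Set.univ a b) :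
    ∃ astar : Bool × Bool,
      ((∃ b1, AbsDomIn1 u1 Set.univ astar.1 b1) ∧
          (∀ b2, u2 astar.1 b2 ≤ u2 astar.1 astar.2)) ∧
      ∀ α : Bool × Bool → ℝ,
        IceCond u1 u2 (ACR u1 u2) α ↔ α = fun a => if a = astar then 1 else 0 := by
  obtain ⟨A1, b, hDom⟩ := hdom1
  have hD : ∀ c d, u1 (!A1) c < u1 A1 d := by
    intro c d
    rcases bool_eq_or b A1 with h | h
    · exfalso; subst h; exact lt_irrefl _ (hDom true trivial true trivial)
    · subst h; exact hDom c trivial d trivial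
  obtain ⟨A2, hBR2⟩ : ∃ a2, u2 A1 (!a2) < u2 A1 a2 := by
    have hne : u2 A1 true ≠ u2 A1 false := by
      intro hEq
      have : ((A1, true) : Bool × Bool) = (A1, false) := hg2 hEq
      simp at this
    rcases lt_or_gt_of_ne hne with h | h
    · exact ⟨false, by simpa using h⟩
    · exact ⟨true, by simpa using h⟩
  have hBR2' : ∀ b2, u2 A1 b2 ≤ u2 A1 A2 := by
    intro b2; rcases bool_eq_or b2 A2 with h | h
    · subst h; exact le_rfl
    · subst h; exact hBR2.le
  have hBR1 : ∀ b1, u1 b1 A2 ≤ u1 A1 A2 := by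
    intro b1; rcases bool_eq_or b1 A1 with h | h
    · subst h; exact le_rfl
    · subst h; exact (hD A2 A2).le
  -- ACR computation
  have hsub1 : ∀ S : Set Bool × Set Bool, S ≤ CRop u1 u2 S → ∀ x ∈ S.1, x = A1 := by
    intro S hS x hx
    rcases bool_eq_or x A1 with h | h
    · exact h
    · exfalso
      have hx' := hS.1 hx
      exact hx' ⟨A1, fun c _ d _ => by rw [h]; exact hD c d⟩
  have hsub2 : ∀ S : Set Bool × Set Bool, S ≤ CRop u1 u2 S → ∀ y ∈ S.2, y = A2 := by
    intro S hS y hy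
    rcases bool_eq_or y A2 with h | h
    · exact h
    · exfalso
      have hy' := hS.2 hy
      refine hy' ⟨A2, fun c hc d hd => ?_⟩
      have hc' := hsub1 S hS c hc
      have hd' := hsub1 S hS d hd
      subst hc'; subst hd'; rw [h]; exact hBR2
  have hfix : (({A1}, {A2}) : Set Bool × Set Bool) ≤ CRop u1 u2 ({A1}, {A2}) := by
    constructor
    · intro x hx
      rintro ⟨b1, hb1⟩
      have hx' : x = A1 := hx
      subst hx'
      exact absurd (hb1 A2 rfl A2 rfl) (not_lt.mpr (hBR1 b1))
    · intro y hy
      rintro ⟨b2, hb2⟩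
      have hy' : y = A2 := hy
      subst hy'
      exact absurd (hb2 A1 rfl A1 rfl) (not_lt.mpr (hBR2' b2))
  have hACR1 : (ACR u1 u2).1 = {A1} := by
    ext x
    constructor
    · rintro ⟨S, hS, hx⟩; exact hsub1 S hS x hx
    · intro hx; exact ⟨({A1}, {A2}), hfix, hx⟩
  have hACR2 : (ACR u1 u2).2 = {A2} := by
    ext y
    constructor
    · rintro ⟨S, hS, hy⟩; exact hsub2 S hS y hy
    · intro hy; exact ⟨({A1}, {A2}), hfix, hy⟩
  refine ⟨(A1, A2), ⟨⟨!A1, fun c _ d _ => hD c d⟩, hBR2'⟩, ?_⟩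
  intro α
  constructor
  · rintro ⟨hpos, hsum, θ, hθ, hI1, hI2⟩
    rw [hACR2] at hI1
    rw [hACR1] at hI2
    -- punishment value for player 1
    have hne : ((fun a2 => u1 A1 a2) '' ({A2} ∪ msupp2 α)).Nonempty :=
      ⟨u1 A1 A2, A2, Or.inl rfl, rfl⟩
    obtain ⟨d, -, hd⟩ := hne.csInf_mem ((Set.toFinite _).image _)
    have hmgt : ∀ c, u1 (!A1) c < sInf ((fun a2 => u1 A1 a2) '' ({A2} ∪ msupp2 α)) :=
      fun c => hd ▸ hD c d
    have hIB := hI1 (!A1) A1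
    rw [sum_bool_c A2] at hIB
    have hb : ∀ t : Bool, α (!A1, t) * (u1 (!A1) t - (1 - θ (!A1, t)) * u1 A1 t
        - θ (!A1, t) * sInf ((fun a2 => u1 A1 a2) '' ({A2} ∪ msupp2 α))) ≤ 0 :=
      fun t => mul_nonpos_of_nonneg_of_nonpos (hpos _)
        (bracket_neg (hθ _).1 (hθ _).2 (hD t t) (hmgt t)).le
    have key : ∀ t, α (!A1, t) = 0 := by
      have hbA := hb A2
      have hbB := hb (!A2)
      have hA : α (!A1, A2) * (u1 (!A1) A2 - (1 - θ (!A1, A2)) * u1 A1 A2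
          - θ (!A1, A2) * sInf ((fun a2 => u1 A1 a2) '' ({A2} ∪ msupp2 α))) = 0 := by
        linarith
      have hB : α (!A1, !A2) * (u1 (!A1) (!A2) - (1 - θ (!A1, !A2)) * u1 A1 (!A2)
          - θ (!A1, !A2) * sInf ((fun a2 => u1 A1 a2) '' ({A2} ∪ msupp2 α))) = 0 := by
        linarith
      have zA : α (!A1, A2) = 0 :=
        (mul_eq_zero.mp hA).resolve_right
          (ne_of_lt (bracket_neg (hθ _).1 (hθ _).2 (hD A2 A2) (hmgt A2)))
      have zB : α (!A1, !A2) = 0 :=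
        (mul_eq_zero.mp hB).resolve_right
          (ne_of_lt (bracket_neg (hθ _).1 (hθ _).2 (hD (!A2) (!A2)) (hmgt (!A2))))
      intro t
      rcases bool_eq_or t A2 with h | h
      · subst h; exact zA
      · subst h; exact zB
    have hP1 : ({A1} : Set Bool) ∪ msupp1 α = {A1} := by
      ext x
      constructor
      · rintro (h | ⟨t, ht⟩)
        · exact h
        · rcases bool_eq_or x A1 with h | h
          · exact h
          · exfalso; apply ht; rw [h]; exact key t
      · intro h; exact Or.inl h
    have hI2' := hI2 (!A2) A2
    rw [hP1, Set.image_singleton, csInf_singleton, sum_bool_c A1, key (!A2), zero_mul,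
      add_zero] at hI2'
    have hbr : u2 A1 (!A2) - θ (A1, !A2) * u2 A1 A2 - (1 - θ (A1, !A2)) * u2 A1 A2 < 0 := by
      have : u2 A1 (!A2) - θ (A1, !A2) * u2 A1 A2 - (1 - θ (A1, !A2)) * u2 A1 A2
          = u2 A1 (!A2) - u2 A1 A2 := by ring
      rw [this]; linarith
    have hz2 : α (A1, !A2) = 0 := by
      have hle := mul_nonpos_of_nonneg_of_nonpos (hpos (A1, !A2)) hbr.le
      have heq := le_antisymm hle hI2'
      exact (mul_eq_zero.mp heq).resolve_right (ne_of_lt hbr)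
    have hone : α (A1, A2) = 1 := by
      rw [sum_prod_bool A1 A2] at hsum
      have k1 := key A2
      have k2 := key (!A2)
      linarith
    funext p
    obtain ⟨x, y⟩ := p
    rcases bool_eq_or x A1 with hx | hx <;> rcases bool_eq_or y A2 with hy | hy <;>
      rw [hx, hy]
    · simpa using hone
    · simpa using hz2
    · simpa using key A2
    · simpa using key (!A2)
  · intro h
    subst h
    have hms1 : msupp1 (fun a => if a = ((A1, A2) : Bool × Bool) then (1:ℝ) else 0) = {A1} := by
      ext x
      constructor
      · rintro ⟨t, ht⟩
        by_contra hx
        apply ht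
        dsimp only
        rw [if_neg]
        intro he
        rw [Prod.mk.injEq] at he
        exact hx he.1
      · rintro rfl; exact ⟨A2, by simp⟩
    have hms2 : msupp2 (fun a => if a = ((A1, A2) : Bool × Bool) then (1:ℝ) else 0) = {A2} := by
      ext y
      constructor
      · rintro ⟨t, ht⟩
        by_contra hy
        apply ht
        dsimp only
        rw [if_neg]
        intro he
        rw [Prod.mk.injEq] at he
        exact hy he.2
      · rintro rfl; exact ⟨A1, by simp⟩
    refine ⟨fun a => by dsimp only; split <;> norm_num, ?_, fun _ => 0,
      fun _ => ⟨le_rfl, zero_le_one⟩, ?_, ?_⟩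
    · rw [sum_prod_bool A1 A2]
      simp [Prod.ext_iff]
    · intro a1 a1'
      rw [hACR2, hms2, Set.union_self, Set.image_singleton, csInf_singleton, sum_bool_c A2]
      dsimp only
      rcases bool_eq_or a1 A1 with h | h <;> rw [h]
      · rw [if_pos rfl, if_neg (show ¬ ((A1, (!A2 : Bool)) = (A1, A2)) by simp)]
        nlinarith [hBR1 a1']
      · rw [if_neg (show ¬ (((!A1 : Bool), A2) = (A1, A2)) by simp),
          if_neg (show ¬ (((!A1 : Bool), (!A2 : Bool)) = (A1, A2)) by simp)]
        simp
    · intro a2 a2'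
      rw [hACR1, hms1, Set.union_self, Set.image_singleton, csInf_singleton, sum_bool_c A1]
      dsimp only
      rcases bool_eq_or a2 A2 with h | h <;> rw [h]
      · rw [if_pos rfl, if_neg (show ¬ (((!A1 : Bool), A2) = (A1, A2)) by simp)]
        nlinarith [hBR2' a2']
      · rw [if_neg (show ¬ ((A1, (!A2 : Bool)) = (A1, A2)) by simp),
          if_neg (show ¬ (((!A1 : Bool), (!A2 : Bool)) = (A1, A2)) by simp)]
        simp

lemma iceSwapAux (u1 u2 : Bool → Bool → ℝ) (B : Set Bool × Set Bool) (α : Bool × Bool → ℝ)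
    (h : IceCond u1 u2 B α) :
    IceCond (fun x y => u2 y x) (fun x y => u1 y x) (B.2, B.1) (fun p => α (p.2, p.1)) := by
  obtain ⟨hpos, hsum, θ, hθ, hI1, hI2⟩ := h
  refine ⟨fun p => hpos _, ?_, fun p => 1 - θ (p.2, p.1),
    fun p => ⟨by dsimp only; linarith [(hθ (p.2, p.1)).2], by dsimp only; linarith [(hθ (p.2, p.1)).1]⟩, ?_, ?_⟩
  · show (∑ p : Bool × Bool, α (p.2, p.1)) = 1
    rw [← hsum]
    exact Fintype.sum_equiv (Equiv.prodComm Bool Bool) _ _ (fun p => rfl)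
  · intro a1 a1'
    show 0 ≤ ∑ x : Bool, α (x, a1) * (u2 x a1 - (1 - (1 - θ (x, a1))) * u2 x a1'
      - (1 - θ (x, a1)) * sInf ((fun y => u2 y a1') '' (B.1 ∪ msupp1 α)))
    refine le_trans (hI2 a1 a1') (le_of_eq (Finset.sum_congr rfl fun x _ => by ring))
  · intro a2 a2'
    show 0 ≤ ∑ x : Bool, α (a2, x) * (u1 a2 x - (1 - θ (a2, x)) * u1 a2' x
      - (1 - (1 - θ (a2, x))) * sInf ((fun y => u1 a2' y) '' (B.2 ∪ msupp2 α)))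
    refine le_trans (hI1 a2 a2') (le_of_eq (Finset.sum_congr rfl fun x _ => by ring))

lemma acrSwap (u1 u2 : Bool → Bool → ℝ) :
    ACR (fun x y => u2 y x) (fun x y => u1 y x) = ((ACR u1 u2).2, (ACR u1 u2).1) := by
  have h1 : (ACR (fun x y => u2 y x) (fun x y => u1 y x)).1 = (ACR u1 u2).2 := by
    ext x
    constructor
    · rintro ⟨S, hS, hx⟩
      exact ⟨(S.2, S.1), ⟨hS.2, hS.1⟩, hx⟩
    · rintro ⟨S, hS, hx⟩
      exact ⟨(S.2, S.1), ⟨hS.2, hS.1⟩, hx⟩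
  have h2 : (ACR (fun x y => u2 y x) (fun x y => u1 y x)).2 = (ACR u1 u2).1 := by
    ext x
    constructor
    · rintro ⟨S, hS, hx⟩
      exact ⟨(S.2, S.1), ⟨hS.2, hS.1⟩, hx⟩
    · rintro ⟨S, hS, hx⟩
      exact ⟨(S.2, S.1), ⟨hS.2, hS.1⟩, hx⟩
  exact Prod.ext h1 h2

/-- Generic 2×2 environment: in each player's payoff matrix all four entries are
distinct (no repeated payoffs). If some player has an absolutely dominated action,
then the unique ICE with respect to `A^CR` is the point mass on the profile where
that player plays his absolutely dominant action and the opponent plays the unique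
best response to it. -/
theorem stmt18 (u1 u2 : Bool → Bool → ℝ)
    (hg1 : Function.Injective (fun p : Bool × Bool => u1 p.1 p.2))
    (hg2 : Function.Injective (fun p : Bool × Bool => u2 p.1 p.2))
    (hdom : (∃ a b : Bool, AbsDomIn1 u1 Set.univ a b)
          ∨ (∃ a b : Bool, AbsDomIn2 u2 Set.univ a b)) :
    ∃ astar : Bool × Bool,
      (((∃ b1, AbsDomIn1 u1 Set.univ astar.1 b1) ∧
          (∀ b2, u2 astar.1 b2 ≤ u2 astar.1 astar.2)) ∨
       ((∃ b2, AbsDomIn2 u2 Set.univ astar.2 b2) ∧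
          (∀ b1, u1 b1 astar.2 ≤ u1 astar.1 astar.2))) ∧
      ∀ α : Bool × Bool → ℝ,
        IceCond u1 u2 (ACR u1 u2) α ↔ α = fun a => if a = astar then 1 else 0 := by

  rcases hdom with h1 | h2
  · obtain ⟨astar, hchar, hiff⟩ := main_lemma u1 u2 hg2 h1
    exact ⟨astar, Or.inl hchar, hiff⟩
  · -- swap players
    have hgv2 : Function.Injective (fun p : Bool × Bool => u1 p.2 p.1) := by
      intro p q h
      have h2' : (p.2, p.1) = (q.2, q.1) := hg1 h
      have := congrArg (fun r : Bool × Bool => ((r.2 : Bool), (r.1 : Bool))) h2'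
      exact this
    have hdomv : ∃ a b : Bool, AbsDomIn1 (fun x y => u2 y x) Set.univ a b := h2
    obtain ⟨astar', ⟨hd', hbr'⟩, hiff'⟩ :=
      main_lemma (fun x y => u2 y x) (fun x y => u1 y x) hgv2 hdomv
    refine ⟨(astar'.2, astar'.1), Or.inr ⟨hd', hbr'⟩, ?_⟩
    intro α
    have hacr := acrSwap u1 u2
    constructor
    · intro h
      have h2' := iceSwapAux u1 u2 (ACR u1 u2) α h
      rw [← hacr] at h2'
      have h3 := (hiff' _).mp h2'
      funext p
      have h4 := congrFun h3 (p.2, p.1)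
      dsimp only at h4
      rw [show α p = α (p.1, p.2) from rfl, h4]
      by_cases hp : p = (astar'.2, astar'.1)
      · subst hp
        simp
      · rw [if_neg hp, if_neg]
        intro he
        apply hp
        rw [← he]
    · intro h
      have hb : IceCond (fun x y => u2 y x) (fun x y => u1 y x)
          ((ACR u1 u2).2, (ACR u1 u2).1) (fun p => α (p.2, p.1)) := by
        rw [← hacr]
        apply (hiff' _).mpr
        funext q
        have h5 := congrFun h (q.2, q.1)
        rw [h5]
        by_cases hq : q = astar'
        · subst hq
          simp
        · rw [if_neg (show ¬ ((q.2, q.1) = ((astar'.2 : Bool), (astar'.1 : Bool))) from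
              fun he => hq (congrArg (fun r : Bool × Bool => ((r.2 : Bool), (r.1 : Bool))) he)),
            if_neg hq]
      exact iceSwapAux _ _ _ _ hb
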